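/- arXiv:1310.1141 — 3 statements merged into one kernel-verified Lean document; each statement's English description precedes it below -/
import Mathlib

section
/- Let U and V be closed subspaces of a Hilbert space H satisfying the subspace condition (cos θ_{U V^⊥} > 0), and suppose dim U = dim V^⊥ = n < ∞. Then U ⊕ V = H. -/
open InnerProductSpace

/-- The cosine of the subspace angle between closed subspaces `A` and `B` of a Hilbert
space: `cos θ_{AB} = inf_{a ∈ A, ‖a‖ = 1} ‖P_B a‖`. -/
noncomputable def cosAngle {H : Type*} [NormedAddCommGroup H] [InnerProductSpace ℂ H]
    (A B : Submodule ℂ H) [B.HasOrthogonalProjection] : ℝ :=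
  ⨅ a : {x : H // x ∈ A ∧ ‖x‖ = 1}, ‖((B.orthogonalProjectionOnto (a : H)) : H)‖

/-- If closed subspaces `U, V` satisfy the subspace condition `cos θ_{U V^⊥} > 0` and
`dim U = dim V^⊥ = n < ∞`, then `U ⊕ V = H`. -/
theorem isCompl_of_subspace_condition_of_finrank_eq
    {H : Type*} [NormedAddCommGroup H] [InnerProductSpace ℂ H] [CompleteSpace H]
    (U V : Submodule ℂ H) [CompleteSpace U] [CompleteSpace V]
    [FiniteDimensional ℂ U] [FiniteDimensional ℂ Vᗮ] (n : ℕ)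
    (hU : Module.finrank ℂ U = n) (hVperp : Module.finrank ℂ Vᗮ = n)
    (hcos : 0 < cosAngle U Vᗮ) :
    IsCompl U V := by
  have hVV : Vᗮᗮ = V := Submodule.orthogonal_orthogonal V
  -- disjointness
  have hdisj : Disjoint U V := by
    rw [Submodule.disjoint_def]
    intro x hxU hxV
    by_contra hx
    have hnorm : ‖(‖x‖⁻¹ • x)‖ = 1 := by
      rw [norm_smul, norm_inv, norm_norm]
      field_simp [norm_eq_zero.not.mpr hx]
    have hmem : (‖x‖⁻¹ : ℂ) • x ∈ U := U.smul_mem _ hxU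
    have hmemV : (‖x‖⁻¹ : ℂ) • x ∈ Vᗮᗮ := Submodule.le_orthogonal_orthogonal V (V.smul_mem _ hxV)
    have hnorm' : ‖((‖x‖⁻¹ : ℂ) • x)‖ = 1 := by
      rw [norm_smul]
      simp only [Complex.norm_real, norm_inv, norm_norm]
      field_simp [norm_eq_zero.not.mpr hx]
    set a : {y : H // y ∈ U ∧ ‖y‖ = 1} := ⟨(‖x‖⁻¹ : ℂ) • x, hmem, hnorm'⟩
    have hproj : Submodule.orthogonalProjectionOnto Vᗮ (a : H) = 0 :=
      Submodule.orthogonalProjectionOnto_eq_zero_iff.mpr hmemV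
    have hle : cosAngle U Vᗮ ≤ ‖((Submodule.orthogonalProjectionOnto Vᗮ (a : H)) : H)‖ :=
      ciInf_le ⟨0, fun r ⟨b, hb⟩ => hb ▸ norm_nonneg _⟩ a
    rw [hproj] at hle
    simp at hle
    linarith
  -- the projection map U → Vᗮ is injective
  set f : U →ₗ[ℂ] Vᗮ :=
    (Submodule.orthogonalProjectionOnto Vᗮ).toLinearMap.comp U.subtype with hf
  have hinj : Function.Injective f := by
    rw [← LinearMap.ker_eq_bot, Submodule.eq_bot_iff]
    rintro ⟨u, hu⟩ hk
    have : Submodule.orthogonalProjectionOnto Vᗮ u = 0 := hk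
    have huV : u ∈ V := hVV ▸ Submodule.orthogonalProjectionOnto_eq_zero_iff.mp this
    have : u = 0 := (Submodule.disjoint_def.mp hdisj) u hu huV
    exact Subtype.ext this
  have hsurj : Function.Surjective f :=
    (LinearMap.injective_iff_surjective_of_finrank_eq_finrank
      (by rw [hU, hVperp])).mp hinj
  constructor
  · exact hdisj
  · rw [codisjoint_iff, eq_top_iff]
    intro x _
    -- x = P_Vᗮ x + (x - P_Vᗮ x), P_Vᗮ x ∈ Vᗮ ⊆ U + V, remainder ∈ V
    obtain ⟨u, hu⟩ := hsurj (Submodule.orthogonalProjectionOnto Vᗮ x)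
    have huU : (u : H) ∈ U := u.2
    have h1 : (u : H) - (Submodule.orthogonalProjectionOnto Vᗮ x : H) ∈ V := by
      have hu' : (Submodule.orthogonalProjectionOnto Vᗮ (u : H) : H) = (Submodule.orthogonalProjectionOnto Vᗮ x : H) := by
        exact_mod_cast congrArg (Subtype.val) hu
      have : (u : H) - (Submodule.orthogonalProjectionOnto Vᗮ (u : H) : H) ∈ Vᗮᗮ :=
        Submodule.sub_starProjection_mem_orthogonal (K := Vᗮ) (u : H)
      rw [hu'] at this
      rwa [hVV] at this
    have h2 : x - (Submodule.orthogonalProjectionOnto Vᗮ x : H) ∈ V := by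
      have : x - (Submodule.orthogonalProjectionOnto Vᗮ x : H) ∈ Vᗮᗮ :=
        Submodule.sub_starProjection_mem_orthogonal (K := Vᗮ) x
      rwa [hVV] at this
    have : x = (u : H) + ((x - (Submodule.orthogonalProjectionOnto Vᗮ x : H))
        - ((u : H) - (Submodule.orthogonalProjectionOnto Vᗮ x : H))) := by abel
    rw [this]
    exact Submodule.add_mem_sup huU (V.sub_mem h2 h1)
end

section
/- Let U and V be closed subspaces of a Hilbert space H with cos(θ_{U V^⊥}) > 0 and dim U = dim V^⊥ = n < ∞. Then cos(θ_{V^⊥ U}) ≥ cos(θ_{U V^⊥}) > 0. -/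
open InnerProductSpace

/-- If `cos θ_{U V^⊥} > 0` and `dim U = dim V^⊥ = n < ∞`, then
`cos θ_{V^⊥ U} ≥ cos θ_{U V^⊥} > 0`. -/
theorem cosAngle_swap_ge
    {H : Type*} [NormedAddCommGroup H] [InnerProductSpace ℂ H] [CompleteSpace H]
    (U V : Submodule ℂ H) [CompleteSpace U] [CompleteSpace V]
    [FiniteDimensional ℂ U] [FiniteDimensional ℂ Vᗮ] (n : ℕ)
    (hU : Module.finrank ℂ U = n) (hVperp : Module.finrank ℂ Vᗮ = n)
    (hcos : 0 < cosAngle U Vᗮ) :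
    cosAngle U Vᗮ ≤ cosAngle Vᗮ U ∧ 0 < cosAngle Vᗮ U := by
  set c := cosAngle U Vᗮ with hc
  -- the index type for U is nonempty
  have hne : Nonempty {x : H // x ∈ U ∧ ‖x‖ = 1} := by
    by_contra h
    have hEmp : IsEmpty {x : H // x ∈ U ∧ ‖x‖ = 1} := not_nonempty_iff.mp h
    have : c = 0 := by
      rw [hc, cosAngle, iInf_of_isEmpty, Real.sInf_empty]
    linarith
  -- key estimate: c * ‖a‖ ≤ ‖P_{Vᗮ} a‖ for a ∈ U
  have hbdd : BddBelow (Set.range fun a : {x : H // x ∈ U ∧ ‖x‖ = 1} =>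
      ‖((Vᗮ.orthogonalProjectionOnto (a : H)) : H)‖) :=
    ⟨0, by rintro _ ⟨a, rfl⟩; positivity⟩
  have key : ∀ a : H, a ∈ U → c * ‖a‖ ≤ ‖((Vᗮ.orthogonalProjectionOnto a) : H)‖ := by
    intro a ha
    rcases eq_or_ne a 0 with rfl | h0
    · simp
    · have hnorm : ‖a‖ ≠ 0 := norm_ne_zero_iff.mpr h0
      set u : H := (‖a‖⁻¹ : ℂ) • a with hu
      have hu1 : ‖u‖ = 1 := by
        rw [hu, norm_smul]
        simp [norm_inv, hnorm]
      have humem : u ∈ U := U.smul_mem _ ha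
      have hle : c ≤ ‖((Vᗮ.orthogonalProjectionOnto u) : H)‖ :=
        ciInf_le hbdd (⟨u, humem, hu1⟩ : {x : H // x ∈ U ∧ ‖x‖ = 1})
      have hPu : ‖((Vᗮ.orthogonalProjectionOnto u) : H)‖
          = ‖a‖⁻¹ * ‖((Vᗮ.orthogonalProjectionOnto a) : H)‖ := by
        rw [hu, map_smul]
        push_cast
        rw [norm_smul]
        simp [norm_inv]
      rw [hPu] at hle
      have hpos : (0:ℝ) < ‖a‖ := norm_pos_iff.mpr h0
      calc c * ‖a‖ ≤ (‖a‖⁻¹ * ‖((Vᗮ.orthogonalProjectionOnto a) : H)‖) * ‖a‖ := by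
            exact mul_le_mul_of_nonneg_right hle (le_of_lt hpos)
        _ = ‖((Vᗮ.orthogonalProjectionOnto a) : H)‖ := by
            field_simp
  -- the restricted projection U → Vᗮ
  let T : U →ₗ[ℂ] Vᗮ := (Vᗮ.orthogonalProjectionOnto).toLinearMap.comp (U.subtype)
  have hTinj : Function.Injective T := by
    rw [← LinearMap.ker_eq_bot, LinearMap.ker_eq_bot']
    intro a hTa
    have h1 : c * ‖(a : H)‖ ≤ ‖((Vᗮ.orthogonalProjectionOnto (a : H)) : H)‖ := key _ a.2
    have h2 : ((Vᗮ.orthogonalProjectionOnto (a : H)) : Vᗮ) = 0 := hTa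
    rw [h2] at h1
    simp only [ZeroMemClass.coe_zero, norm_zero] at h1
    have : ‖(a : H)‖ = 0 := by nlinarith [norm_nonneg (a : H)]
    ext
    simpa using norm_eq_zero.mp this
  have hTsurj : Function.Surjective T :=
    (LinearMap.injective_iff_surjective_of_finrank_eq_finrank (by rw [hU, hVperp])).mp hTinj
  -- Vᗮ has a unit vector
  have hneV : Nonempty {x : H // x ∈ Vᗮ ∧ ‖x‖ = 1} := by
    obtain ⟨a0⟩ := hne
    have hUnt : Nontrivial U := by
      refine ⟨⟨a0.1, a0.2.1⟩, 0, ?_⟩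
      intro h
      have h0 : (a0.1 : H) = 0 := congrArg Subtype.val h
      have h1 := a0.2.2
      rw [h0] at h1
      simp at h1
    have hpos : 0 < Module.finrank ℂ Vᗮ := by
      rw [hVperp, ← hU]
      exact Module.finrank_pos
    have : Nontrivial Vᗮ := Module.finrank_pos_iff.mp hpos
    obtain ⟨x, hx⟩ := exists_ne (0 : Vᗮ)
    have hxH : (x : H) ≠ 0 := fun h => hx (by ext; simpa using h)
    have hxn : ‖(x : H)‖ ≠ 0 := norm_ne_zero_iff.mpr hxH
    refine ⟨⟨(‖(x:H)‖⁻¹ : ℂ) • (x : H), Vᗮ.smul_mem _ x.2, ?_⟩⟩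
    rw [norm_smul]
    simp [norm_inv, hxn]
  -- main bound
  have main : c ≤ cosAngle Vᗮ U := by
    rw [cosAngle]
    refine le_ciInf ?_
    rintro ⟨b, hbV, hb1⟩
    obtain ⟨a, ha⟩ := hTsurj ⟨b, hbV⟩
    have hPa : ((Vᗮ.orthogonalProjectionOnto (a : H)) : H) = b := congrArg Subtype.val ha
    -- ⟪b, a⟫ = ⟪b, P a⟫ = ⟪b, b⟫ = 1
    have horth : ⟪b, (a : H) - ((Vᗮ.orthogonalProjectionOnto (a : H)) : H)⟫_ℂ = 0 := by
      have hmem : (a : H) - ((Vᗮ.orthogonalProjectionOnto (a : H)) : H) ∈ Vᗮᗮ :=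
        Submodule.sub_starProjection_mem_orthogonal (K := Vᗮ) (a : H)
      exact (Submodule.mem_orthogonal _ _).mp hmem b hbV
    have hba : ⟪b, (a : H)⟫_ℂ = 1 := by
      have := horth
      rw [inner_sub_right, sub_eq_zero] at this
      rw [this, hPa, inner_self_eq_norm_sq_to_K, hb1]
      norm_num
    -- ⟪b, a⟫ = ⟪Q b, a⟫
    have horth2 : ⟪b - ((U.orthogonalProjectionOnto b) : H), (a : H)⟫_ℂ = 0 := by
      have hmem : b - ((U.orthogonalProjectionOnto b) : H) ∈ Uᗮ :=
        Submodule.sub_starProjection_mem_orthogonal (K := U) b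
      exact (Submodule.mem_orthogonal' _ _).mp hmem (a : H) a.2
    have hQa : ⟪((U.orthogonalProjectionOnto b) : H), (a : H)⟫_ℂ = 1 := by
      rw [inner_sub_left, sub_eq_zero] at horth2
      rw [← horth2, hba]
    have h1 : (1 : ℝ) ≤ ‖((U.orthogonalProjectionOnto b) : H)‖ * ‖(a : H)‖ := by
      have := norm_inner_le_norm (𝕜 := ℂ) ((U.orthogonalProjectionOnto b) : H) (a : H)
      rw [hQa] at this
      simpa using this
    have h2 : c * ‖(a : H)‖ ≤ 1 := by
      have := key (a : H) a.2
      rw [hPa, hb1] at this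
      exact this
    nlinarith [norm_nonneg ((U.orthogonalProjectionOnto b : H)), norm_nonneg (a : H)]
  exact ⟨main, lt_of_lt_of_le hcos main⟩
end

section
/- Let U and V be closed subspaces of a Hilbert space H satisfying the subspace condition, let f ∈ H₀ := U ⊕ V, and consider the variational problem: find g ∈ U such that ⟨g, w⟩ = ⟨f, w⟩ for all w ∈ V^⊥. This problem has a unique solution, and it equals the oblique projection P_{UV} f. -/
open InnerProductSpace

open scoped ComplexInnerProductSpace in
/-- Variational characterization of the oblique projection: for `f ∈ H₀ = U ⊕ V`, the problem
"find `g ∈ U` with `⟨g, w⟩ = ⟨f, w⟩` for all `w ∈ V^⊥`" has a unique solution, which equals the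
oblique projection `P_{UV} f`, i.e. the `U`-component of `f` in the decomposition `f = u + v`. -/
theorem variational_problem_unique_solution
    {H : Type*} [NormedAddCommGroup H] [InnerProductSpace ℂ H] [CompleteSpace H]
    (U V : Submodule ℂ H) [CompleteSpace U] [CompleteSpace V]
    (hmeet : U ⊓ V = ⊥) (hsum : IsClosed ((U ⊔ V : Submodule ℂ H) : Set H))
    (f : H) (hf : f ∈ U ⊔ V) :
    (∃! g : H, g ∈ U ∧ ∀ w ∈ Vᗮ, ⟪g, w⟫ = ⟪f, w⟫) ∧
      ∀ g u v : H, g ∈ U → (∀ w ∈ Vᗮ, ⟪g, w⟫ = ⟪f, w⟫) →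
        u ∈ U → v ∈ V → f = u + v → g = u := by
  have key : ∀ x : H, (∀ w ∈ Vᗮ, ⟪x, w⟫ = 0) ↔ x ∈ V := by
    intro x
    constructor
    · intro h
      rw [← Submodule.orthogonal_orthogonal V]
      intro w hw
      exact (inner_eq_zero_symm.mp (h w hw))
    · intro hx w hw
      exact hw x hx
  have cond : ∀ g : H, (∀ w ∈ Vᗮ, ⟪g, w⟫ = ⟪f, w⟫) ↔ f - g ∈ V := by
    intro g
    rw [← key (f - g)]
    constructor
    · intro h w hw
      rw [inner_sub_left, h w hw, sub_self]
    · intro h w hw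
      have := h w hw
      rw [inner_sub_left, sub_eq_zero] at this
      exact this.symm
  have uniq : ∀ g₁ g₂ : H, g₁ ∈ U → g₂ ∈ U → f - g₁ ∈ V → f - g₂ ∈ V → g₁ = g₂ := by
    intro g₁ g₂ h₁ h₂ hv₁ hv₂
    have hU : g₁ - g₂ ∈ U := U.sub_mem h₁ h₂
    have hV : g₁ - g₂ ∈ V := by
      have := V.sub_mem hv₂ hv₁
      simpa using this
    have : g₁ - g₂ ∈ U ⊓ V := ⟨hU, hV⟩
    rw [hmeet, Submodule.mem_bot, sub_eq_zero] at this
    exact this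
  obtain ⟨u, hu, v, hv, huv⟩ := Submodule.mem_sup.mp hf
  constructor
  · refine ⟨u, ⟨hu, (cond u).mpr ?_⟩, ?_⟩
    · rw [← huv]; simpa using hv
    · intro g ⟨hgU, hg⟩
      exact uniq g u hgU hu ((cond g).mp hg) (by rw [← huv]; simpa using hv)
  · intro g u' v' hgU hg hu' hv' hf'
    exact uniq g u' hgU hu' ((cond g).mp hg) (by rw [hf']; simpa using hv')
end
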